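/- arXiv:1708.05490 — 3 statements merged into one kernel-verified Lean document; each statement's English description precedes it below -/
import Mathlib

section
/- Let C be an [n,k] linear code over F_p (p prime) with generator matrix in standard form G = (I_k | M), g_{ij} its entries. For 1 ≤ i ≤ k let m_i = (0,...,0, p−g_{i,k+1},..., p−g_{i,n}). Then under the translation of coordinates X_i ↦ X_i + 1, the code ideal I_C = ⟨X^c − X^{c'} : c − c' ∈ C⟩ + ⟨X_i^p − 1 : 1 ≤ i ≤ n⟩ is carried to the ideal I_C' = ⟨(X_i+1) + (p−1)·∏_{j ∈ supp(m_i)} (X_j+1)^{p−g_{i,j}} : 1 ≤ i ≤ k⟩ + ⟨(X_i+1)^p + (p−1) : k+1 ≤ i ≤ n⟩ in F_p[X]. -/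
open MvPolynomial

noncomputable section

/-- The exponent vector of a word `c ∈ F_p^n`, viewing entries as integers. -/
def toExp {p n : ℕ} (c : Fin n → ZMod p) : Fin n →₀ ℕ :=
  Finsupp.equivFunOnFinite.symm fun i => (c i).val

/-- The code generated by the rows of `G`. -/
def code {p n k : ℕ} (G : Fin k → Fin n → ZMod p) : Submodule (ZMod p) (Fin n → ZMod p) :=
  Submodule.span (ZMod p) (Set.range G)

/-- The code ideal `I_C = ⟨X^c - X^{c'} : c - c' ∈ C⟩ + ⟨X_i^p - 1 : 1 ≤ i ≤ n⟩`. -/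
def codeIdeal (p n k : ℕ) (G : Fin k → Fin n → ZMod p) :
    Ideal (MvPolynomial (Fin n) (ZMod p)) :=
  Ideal.span
    ({f | ∃ c c' : Fin n → ZMod p, c - c' ∈ code G ∧
        f = monomial (toExp c) 1 - monomial (toExp c') 1} ∪
      {f | ∃ i : Fin n, f = X i ^ p - 1})

/-- `supp(m_i)`, the set of columns `j > k` with `g_{ij} ≠ 0`. -/
def suppM {p n k : ℕ} (G : Fin k → Fin n → ZMod p) (i : Fin k) : Finset (Fin n) :=
  Finset.univ.filter fun j => k ≤ (j : ℕ) ∧ G i j ≠ 0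

/-- The translated code ideal
`I_C' = ⟨(X_i+1) + (p-1)∏_{j∈supp(m_i)}(X_j+1)^{p-g_{ij}}⟩ + ⟨(X_i+1)^p + (p-1)⟩`. -/
def codeIdeal' (p n k : ℕ) (hkn : k ≤ n) (G : Fin k → Fin n → ZMod p) :
    Ideal (MvPolynomial (Fin n) (ZMod p)) :=
  Ideal.span
    ({f | ∃ i : Fin k, f = (X (Fin.castLE hkn i) + 1) +
        C ((p : ZMod p) - 1) * ∏ j ∈ suppM G i, (X j + 1) ^ (p - (G i j).val)} ∪
      {f | ∃ i : Fin n, k ≤ (i : ℕ) ∧ f = (X i + 1) ^ p + C ((p : ZMod p) - 1)})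

lemma aux_pow_mod {M : Type*} [Monoid M] {a : M} {p : ℕ} (h : a ^ p = 1) (m : ℕ) :
    a ^ m = a ^ (m % p) := by
  conv_lhs => rw [← Nat.div_add_mod m p]
  rw [pow_add, pow_mul, h, one_pow, one_mul]


/-- The translation `X_i ↦ X_i + 1` carries the code ideal `I_C` to `I_C'`. -/
theorem translated_code_ideal (p n k : ℕ) [Fact p.Prime] (hkn : k ≤ n)
    (G : Fin k → Fin n → ZMod p)
    (hstd : ∀ i j : Fin k, G i (Fin.castLE hkn j) = if i = j then 1 else 0) :
    Ideal.map
        (MvPolynomial.aeval (fun i : Fin n => X i + 1) :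
          MvPolynomial (Fin n) (ZMod p) →ₐ[ZMod p] MvPolynomial (Fin n) (ZMod p))
        (codeIdeal p n k G)
      = codeIdeal' p n k hkn G := by
  haveI : Fact (1 < p) := ⟨(Fact.out : p.Prime).one_lt⟩
  haveI : NeZero p := ⟨(Fact.out : p.Prime).ne_zero⟩
  set φ : MvPolynomial (Fin n) (ZMod p) →ₐ[ZMod p] MvPolynomial (Fin n) (ZMod p) :=
    MvPolynomial.aeval (fun i : Fin n => X i + 1) with hφ
  have hC : (C ((p : ZMod p) - 1) : MvPolynomial (Fin n) (ZMod p)) = -1 := by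
    rw [ZMod.natCast_self]; simp
  have hmon : ∀ c : Fin n → ZMod p,
      φ (monomial (toExp c) 1) = ∏ j, (X j + 1) ^ (c j).val := by
    intro c
    rw [hφ, aeval_monomial, map_one, one_mul, Finsupp.prod_pow]
    rfl
  -- facts about G in low columns
  have hlow : ∀ (i : Fin k) (j : Fin n), (j : ℕ) < k → j ≠ Fin.castLE hkn i → G i j = 0 := by
    intro i j hj hne
    have hj' : Fin.castLE hkn ⟨(j : ℕ), hj⟩ = j := rfl
    rw [← hj', hstd i ⟨(j : ℕ), hj⟩, if_neg]
    intro h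
    apply hne
    rw [← hj', h]
  have hdiag : ∀ i : Fin k, G i (Fin.castLE hkn i) = 1 := by
    intro i; rw [hstd, if_pos rfl]
  set B := codeIdeal' p n k hkn G with hB
  set q : MvPolynomial (Fin n) (ZMod p) →+* MvPolynomial (Fin n) (ZMod p) ⧸ B :=
    Ideal.Quotient.mk B with hq
  set u : Fin n → MvPolynomial (Fin n) (ZMod p) ⧸ B := fun j => q (X j + 1) with hu
  have hgen2 : ∀ j : Fin n, k ≤ (j : ℕ) → u j ^ p = 1 := by
    intro j hj
    have hmem : ((X j + 1) ^ p + C ((p : ZMod p) - 1) : MvPolynomial (Fin n) (ZMod p)) ∈ B := by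
      apply Ideal.subset_span; right; exact ⟨j, hj, rfl⟩
    have h0 := Ideal.Quotient.eq_zero_iff_mem.2 hmem
    rw [hC] at h0
    rw [map_add, map_pow, map_neg, map_one] at h0
    have h1 : u j ^ p - 1 = 0 := by rw [sub_eq_add_neg]; exact h0
    exact eq_of_sub_eq_zero h1
  have hgen1 : ∀ i : Fin k,
      u (Fin.castLE hkn i) = ∏ j ∈ suppM G i, u j ^ (p - (G i j).val) := by
    intro i
    have hmem : ((X (Fin.castLE hkn i) + 1) +
        C ((p : ZMod p) - 1) * ∏ j ∈ suppM G i, (X j + 1) ^ (p - (G i j).val) :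
          MvPolynomial (Fin n) (ZMod p)) ∈ B := by
      apply Ideal.subset_span; left; exact ⟨i, rfl⟩
    have h0 := Ideal.Quotient.eq_zero_iff_mem.2 hmem
    rw [hC] at h0
    rw [map_add, map_mul, map_neg, map_one, map_prod] at h0
    simp only [map_pow] at h0
    simp only [hu]
    linear_combination h0
  have hgen3 : ∀ j : Fin n, u j ^ p = 1 := by
    intro j
    by_cases hj : k ≤ (j : ℕ)
    · exact hgen2 j hj
    · push_neg at hj
      have hj' : j = Fin.castLE hkn ⟨(j : ℕ), hj⟩ := rfl
      rw [hj', hgen1 ⟨(j : ℕ), hj⟩]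
      rw [← Finset.prod_pow]
      apply Finset.prod_eq_one
      intro l hl
      have hlk : k ≤ (l : ℕ) := (Finset.mem_filter.1 hl).2.1
      rw [← pow_mul, mul_comm, pow_mul, hgen2 l hlk, one_pow]
  -- the multiplicative character θ
  set θ : (Fin n → ZMod p) → MvPolynomial (Fin n) (ZMod p) ⧸ B :=
    fun c => ∏ j, u j ^ (c j).val with hθ
  have hadd : ∀ c c', θ (c + c') = θ c * θ c' := by
    intro c c'
    have key : ∀ j : Fin n, u j ^ ((c + c') j).val = u j ^ (c j).val * u j ^ (c' j).val := by
      intro j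
      rw [Pi.add_apply, ZMod.val_add, ← aux_pow_mod (hgen3 j), pow_add]
    simp only [hθ, key, Finset.prod_mul_distrib]
  have hzero : θ 0 = 1 := by
    rw [hθ]; simp
  have hsmul : ∀ (a : ZMod p) (c), θ (a • c) = θ c ^ a.val := by
    intro a c
    have key : ∀ j : Fin n, u j ^ ((a • c) j).val = (u j ^ (c j).val) ^ a.val := by
      intro j
      rw [Pi.smul_apply, smul_eq_mul, ZMod.val_mul, ← aux_pow_mod (hgen3 j), ← pow_mul,
        mul_comm]
    simp only [hθ, key, Finset.prod_pow]
  have hrow : ∀ i : Fin k, θ (G i) = 1 := by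
    intro i
    show (∏ j, u j ^ (G i j).val) = 1
    rw [← Finset.prod_filter_mul_prod_filter_not (Finset.univ : Finset (Fin n))
      (fun j => (j : ℕ) < k) (fun j => u j ^ (G i j).val)]
    have hlowprod : (∏ j ∈ Finset.univ.filter (fun j : Fin n => (j : ℕ) < k),
        u j ^ (G i j).val) = u (Fin.castLE hkn i) := by
      rw [Finset.prod_eq_single (Fin.castLE hkn i)]
      · rw [hdiag, ZMod.val_one, pow_one]
      · intro j hj hne
        rw [hlow i j (Finset.mem_filter.1 hj).2 hne, ZMod.val_zero, pow_zero]
      · intro h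
        exact absurd (Finset.mem_filter.mpr
          ⟨Finset.mem_univ (Fin.castLE hkn i), i.isLt⟩) h
    have hhighprod : (∏ j ∈ Finset.univ.filter (fun j : Fin n => ¬ (j : ℕ) < k),
        u j ^ (G i j).val) = ∏ j ∈ suppM G i, u j ^ (G i j).val := by
      symm
      apply Finset.prod_subset
      · intro j hj
        have hj' := Finset.mem_filter.1 hj
        exact Finset.mem_filter.2 ⟨Finset.mem_univ j, not_lt.2 hj'.2.1⟩
      · intro j hj hnj
        have hjk : k ≤ (j : ℕ) := not_lt.1 (Finset.mem_filter.1 hj).2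
        have : G i j = 0 := by
          by_contra h
          exact hnj (Finset.mem_filter.2 ⟨Finset.mem_univ _, hjk, h⟩)
        rw [this, ZMod.val_zero, pow_zero]
    rw [hlowprod, hhighprod, hgen1 i, ← Finset.prod_mul_distrib]
    apply Finset.prod_eq_one
    intro j hj
    rw [← pow_add, Nat.sub_add_cancel (ZMod.val_lt (G i j)).le, hgen3 j]
  have hcode : ∀ c ∈ code G, θ c = 1 := by
    intro c hc
    induction hc using Submodule.span_induction with
    | mem x hx => obtain ⟨i, rfl⟩ := hx; exact hrow i
    | zero => exact hzero
    | add x y _ _ hx hy => rw [hadd, hx, hy, one_mul]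
    | smul a x _ hx => rw [hsmul, hx, one_pow]
  have hqmon : ∀ c : Fin n → ZMod p, q (φ (monomial (toExp c) 1)) = θ c := by
    intro c
    rw [hmon, map_prod, hθ]
    exact Finset.prod_congr rfl fun j _ => by rw [map_pow]
  apply le_antisymm
  · rw [codeIdeal, Ideal.map_span, Ideal.span_le]
    rintro f ⟨g, hg, rfl⟩
    rw [SetLike.mem_coe]
    rcases hg with ⟨c, c', hcc', rfl⟩ | ⟨i, rfl⟩
    · rw [← Ideal.Quotient.eq_zero_iff_mem, map_sub]
      change q (φ _) - q (φ _) = 0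
      rw [hqmon, hqmon, sub_eq_zero]
      have : θ c = θ (c - c' + c') := by rw [sub_add_cancel]
      rw [this, hadd, hcode _ hcc', one_mul]
    · rw [← Ideal.Quotient.eq_zero_iff_mem]
      have hφf : φ (X i ^ p - 1) = (X i + 1) ^ p - 1 := by
        rw [map_sub, map_pow, map_one, hφ, aeval_X]
      change q (φ _) = 0
      rw [hφf, map_sub, map_pow, map_one, sub_eq_zero]
      exact hgen3 i
  · rw [hB, codeIdeal', Ideal.span_le]
    rintro f hf
    rw [SetLike.mem_coe]
    rcases hf with ⟨i, rfl⟩ | ⟨i, hik, rfl⟩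
    · -- generator for i < k
      set c : Fin n → ZMod p := fun j => if j = Fin.castLE hkn i then 1 else 0 with hc
      set c' : Fin n → ZMod p := c - G i with hc'
      have hsub : c - c' = G i := by rw [hc']; ring
      have hmemA : (monomial (toExp c) 1 - monomial (toExp c') 1 : MvPolynomial (Fin n) (ZMod p))
          ∈ codeIdeal p n k G := by
        apply Ideal.subset_span
        left
        exact ⟨c, c', hsub ▸ Submodule.subset_span ⟨i, rfl⟩, rfl⟩
      have := Ideal.mem_map_of_mem φ hmemA
      have hφeq : φ (monomial (toExp c) 1 - monomial (toExp c') 1) =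
          (X (Fin.castLE hkn i) + 1) +
            C ((p : ZMod p) - 1) * ∏ j ∈ suppM G i, (X j + 1) ^ (p - (G i j).val) := by
        rw [map_sub, hmon, hmon, hC, neg_one_mul, ← sub_eq_add_neg]
        have hfst : (∏ j, (X j + 1) ^ (c j).val : MvPolynomial (Fin n) (ZMod p))
            = X (Fin.castLE hkn i) + 1 := by
          rw [Finset.prod_eq_single (Fin.castLE hkn i)]
          · rw [hc]; simp [ZMod.val_one]
          · intro j _ hne
            rw [hc]; simp [hne]
          · intro h; exact absurd (Finset.mem_univ _) h
        have hsnd : (∏ j, (X j + 1) ^ (c' j).val : MvPolynomial (Fin n) (ZMod p))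
            = ∏ j ∈ suppM G i, (X j + 1) ^ (p - (G i j).val) := by
          have step1 : (∏ j, (X j + 1) ^ (c' j).val : MvPolynomial (Fin n) (ZMod p))
              = ∏ j ∈ suppM G i, (X j + 1) ^ (c' j).val := by
            symm
            apply Finset.prod_subset (Finset.subset_univ _)
            intro j _ hnj
            have hc'j : c' j = 0 := by
              by_cases hjk : (j : ℕ) < k
              · by_cases hje : j = Fin.castLE hkn i
                · rw [hc', Pi.sub_apply, hje, hdiag, hc]; simp
                · rw [hc', Pi.sub_apply, hlow i j hjk hje, hc]; simp [hje]
              · have hGij : G i j = 0 := by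
                  by_contra h
                  exact hnj (Finset.mem_filter.2 ⟨Finset.mem_univ _, not_lt.1 hjk, h⟩)
                have hje : j ≠ Fin.castLE hkn i := by
                  intro h
                  apply hjk
                  rw [h]
                  exact i.isLt
                rw [hc', Pi.sub_apply, hGij, hc]; simp [hje]
            rw [hc'j, ZMod.val_zero, pow_zero]
          rw [step1]
          apply Finset.prod_congr rfl
          intro j hj
          have hGij : G i j ≠ 0 := (Finset.mem_filter.1 hj).2.2
          have hje : j ≠ Fin.castLE hkn i := by
            intro h
            exact absurd (Finset.mem_filter.1 hj).2.1 (by rw [h]; exact not_le.2 i.isLt)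
          have hval : c' j = - G i j := by
            rw [hc', Pi.sub_apply, hc]; simp [hje]
          rw [hval, ZMod.neg_val, if_neg hGij]
        rw [hfst, hsnd]
      rw [← hφeq]
      exact this
    · -- generator for i ≥ k
      have hmemA : (X i ^ p - 1 : MvPolynomial (Fin n) (ZMod p)) ∈ codeIdeal p n k G := by
        apply Ideal.subset_span; right; exact ⟨i, rfl⟩
      have := Ideal.mem_map_of_mem φ hmemA
      have hφeq : φ (X i ^ p - 1) = (X i + 1) ^ p + C ((p : ZMod p) - 1) := by
        rw [map_sub, map_pow, map_one, hφ, aeval_X, hC, ← sub_eq_add_neg]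
      rw [← hφeq]
      exact this

end
end

section
/- Let C be an [n,k] code over F_p (p prime) with generator matrix G = (I_k|M). Under the negative degree lexicographic (local) order > on F_p[X], the set S = { X_i − ∑_{(t_1,...,t_{σ_i}) ≠ 0} ∏_{h=1}^{σ_i} C(p−g_{i,j_h}, t_h) X_{j_h}^{t_h} : 1 ≤ i ≤ k } ∪ { X_i^p : k+1 ≤ i ≤ n } is a standard basis of the ideal I = I_C' · Loc_>(F_p[X]) in the localization Loc_>(F_p[X]); in particular the leading-term ideal of I is generated by {X_1,...,X_k, X_{k+1}^p,...,X_n^p}. -/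
open MvPolynomial

noncomputable section

def eExp (p n k : ℕ) (G : Fin k → Fin n → ZMod p) (i : Fin k) (j : Fin n) : ℕ :=
  if k ≤ (j : ℕ) ∧ G i j ≠ 0 then p - (G i j).val else 0

/-- The standard-basis element
`A_i = X_i - ∑_{(t) ≠ 0} ∏_h C(p - g_{i,j_h}, t_h) X_{j_h}^{t_h}`. -/
def stdElt (p n k : ℕ) (hkn : k ≤ n) (G : Fin k → Fin n → ZMod p) (i : Fin k) :
    MvPolynomial (Fin n) (ZMod p) :=
  X (Fin.castLE hkn i) -
    ∑ t ∈ (Fintype.piFinset fun j : Fin n => Finset.range (eExp p n k G i j + 1)).filter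
        (fun t => t ≠ fun _ => 0),
      ∏ j ∈ suppM G i, C (((eExp p n k G i j).choose (t j) : ZMod p)) * X j ^ t j

/-- Lexicographic order with `X_1 > ... > X_n`. -/
def lexGt {n : ℕ} (a b : Fin n →₀ ℕ) : Prop :=
  ∃ i : Fin n, (∀ j, j < i → a j = b j) ∧ b i < a i

/-- Negative degree lexicographic order (a local order): smaller total degree is larger,
ties broken lexicographically. -/
def negDegLexGt {n : ℕ} (a b : Fin n →₀ ℕ) : Prop :=
  (∑ j, a j) < (∑ j, b j) ∨ ((∑ j, a j) = (∑ j, b j) ∧ lexGt a b)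

def IsLeadMon {σ : Type*} {K : Type*} [CommSemiring K]
    (r : (σ →₀ ℕ) → (σ →₀ ℕ) → Prop) (f : MvPolynomial σ K) (α : σ →₀ ℕ) : Prop :=
  α ∈ f.support ∧ ∀ β ∈ f.support, β ≠ α → r α β

/-- The multiplicative set `S_>` of polynomials with constant term `1`;
`Loc_>(F_p[X]) = S_>⁻¹ F_p[X]`. -/
def unitSet (n : ℕ) (K : Type*) [CommSemiring K] : Submonoid (MvPolynomial (Fin n) K) :=
  Submonoid.comap
    (constantCoeff : MvPolynomial (Fin n) K →+* K).toMonoidHom (⊥ : Submonoid K)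

/-- Leading terms (w.r.t. negative degree lex) of the members of `S`. -/
def LTset {n : ℕ} {K : Type*} [CommSemiring K] (S : Set (MvPolynomial (Fin n) K)) :
    Set (MvPolynomial (Fin n) K) :=
  {m | ∃ f ∈ S, ∃ α, IsLeadMon negDegLexGt f α ∧ m = monomial α (f.coeff α)}

-- ===== auxiliary development (to be inserted before the main theorem) =====

/-- Abbreviation for the product `∏_{j ∈ supp(m_i)} (X_j+1)^{p-g_{ij}}`. -/
def Hprod (p n k : ℕ) (G : Fin k → Fin n → ZMod p) (i : Fin k) : MvPolynomial (Fin n) (ZMod p) :=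
  ∏ j ∈ suppM G i, (X j + 1) ^ (p - (G i j).val)

/-- total degree of an exponent vector -/
def deg {n : ℕ} (a : Fin n →₀ ℕ) : ℕ := ∑ j, a j

lemma deg_add {n : ℕ} (a b : Fin n →₀ ℕ) : deg (a + b) = deg a + deg b := by
  simp [deg, Finset.sum_add_distrib]

lemma deg_eq_zero_iff {n : ℕ} (a : Fin n →₀ ℕ) : deg a = 0 ↔ a = 0 := by
  constructor
  · intro h; ext j
    have := Finset.sum_eq_zero_iff.mp h j (Finset.mem_univ j)
    simpa using this
  · rintro rfl; simp [deg]

lemma deg_single {n : ℕ} (v : Fin n) (e : ℕ) : deg (Finsupp.single v e) = e := by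
  rw [deg, Finset.sum_eq_single v]
  · simp
  · intro b _ hb; simp [Finsupp.single_apply, Ne.symm hb]
  · intro h; exact absurd (Finset.mem_univ v) h

/-- `MinDeg m f` : every monomial of `f` has total degree at least `m`. -/
def MinDeg {n : ℕ} {K : Type*} [CommSemiring K] (m : ℕ) (f : MvPolynomial (Fin n) K) : Prop :=
  ∀ γ ∈ f.support, m ≤ deg γ

lemma minDeg_zero {n : ℕ} {K : Type*} [CommSemiring K] (f : MvPolynomial (Fin n) K) :
    MinDeg 0 f := fun _ _ => Nat.zero_le _

lemma minDeg_mul {n : ℕ} {K : Type*} [CommRing K] {a b : ℕ} {f g : MvPolynomial (Fin n) K}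
    (hf : MinDeg a f) (hg : MinDeg b g) : MinDeg (a + b) (f * g) := by
  classical
  intro γ hγ
  obtain ⟨δ, hδ, ε, hε, rfl⟩ := Finset.mem_add.mp (MvPolynomial.support_mul f g hγ)
  rw [deg_add]
  exact Nat.add_le_add (hf δ hδ) (hg ε hε)

lemma minDeg_pow {n : ℕ} {K : Type*} [CommRing K] {f : MvPolynomial (Fin n) K}
    (hf : MinDeg 1 f) (e : ℕ) : MinDeg e (f ^ e) := by
  induction e with
  | zero => exact minDeg_zero _
  | succ e ih =>
      have := minDeg_mul ih hf
      rwa [← pow_succ] at this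

lemma add_one_pow_eq (p n : ℕ) (e : ℕ) (x : MvPolynomial (Fin n) (ZMod p)) :
    (x + 1)^e = ∑ m ∈ Finset.range (e+1), C ((e.choose m : ZMod p)) * x ^ m := by
  rw [add_pow]; apply Finset.sum_congr rfl; intro m _; simp [C_eq_coe_nat]; ring

lemma stdElt_eq (p n k : ℕ) (hkn : k ≤ n) (G : Fin k → Fin n → ZMod p) (i : Fin k) :
    stdElt p n k hkn G i = X (Fin.castLE hkn i) + 1 - Hprod p n k G i := by
  classical
  have h0 : (fun _ : Fin n => 0) ∈ Fintype.piFinset fun j : Fin n =>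
      Finset.range (eExp p n k G i j + 1) := by
    simp
  have hfull : ∑ t ∈ Fintype.piFinset (fun j : Fin n => Finset.range (eExp p n k G i j + 1)),
      ∏ j ∈ suppM G i, C (((eExp p n k G i j).choose (t j) : ZMod p)) * X j ^ t j
      = Hprod p n k G i := by
    have : ∀ t : Fin n → ℕ,
        (∏ j ∈ suppM G i, C (((eExp p n k G i j).choose (t j) : ZMod p)) * X j ^ t j)
        = ∏ j : Fin n, (if k ≤ (j : ℕ) ∧ G i j ≠ 0 then
            C (((eExp p n k G i j).choose (t j) : ZMod p)) * X j ^ t j else 1) := by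
      intro t
      rw [suppM, Finset.prod_filter]
    simp_rw [this]
    rw [← Finset.prod_univ_sum (fun j => Finset.range (eExp p n k G i j + 1))
      (fun j m => if k ≤ (j:ℕ) ∧ G i j ≠ 0 then
        C (((eExp p n k G i j).choose m : ZMod p)) * X j ^ m else 1)]
    rw [Hprod, suppM, Finset.prod_filter]
    apply Finset.prod_congr rfl
    intro j _
    by_cases hj : k ≤ (j : ℕ) ∧ G i j ≠ 0
    · simp only [if_pos hj]
      have he : eExp p n k G i j = p - (G i j).val := by rw [eExp, if_pos hj]
      rw [he, add_one_pow_eq]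
    · simp only [if_neg hj]
      have he : eExp p n k G i j = 0 := by rw [eExp, if_neg hj]
      simp [he]
  rw [stdElt, Finset.filter_ne', Finset.sum_erase_eq_sub h0, hfull]
  have : (∏ j ∈ suppM G i, C (((eExp p n k G i j).choose 0 : ZMod p)) * X j ^ (0:ℕ)) = 1 := by
    simp
  rw [this]
  ring

lemma deg_le_of_lead {n : ℕ} {K : Type*} [CommSemiring K] {f : MvPolynomial (Fin n) K}
    {α : Fin n →₀ ℕ} (h : IsLeadMon negDegLexGt f α) {β : Fin n →₀ ℕ}
    (hβ : β ∈ f.support) : deg α ≤ deg β := by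
  by_cases hba : β = α
  · subst hba; exact le_rfl
  · rcases h.2 β hβ hba with h1 | h2
    · exact Nat.le_of_lt h1
    · exact Nat.le_of_eq h2.1

lemma isLeadMon_mul {n : ℕ} {K : Type*} [CommRing K] {s f : MvPolynomial (Fin n) K}
    {α : Fin n →₀ ℕ} (hs : constantCoeff s = 1) (hf : IsLeadMon negDegLexGt f α) :
    IsLeadMon negDegLexGt (f * s) α := by
  classical
  have hs0 : coeff 0 s = 1 := hs
  have hcoeff : coeff α (f * s) = coeff α f := by
    rw [coeff_mul, Finset.sum_eq_single (α, (0 : Fin n →₀ ℕ))]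
    · rw [hs0, mul_one]
    · rintro ⟨β, γ⟩ hmem hne
      rw [Finset.HasAntidiagonal.mem_antidiagonal] at hmem
      by_cases hb : β ∈ f.support
      · exfalso
        have h1 : deg α ≤ deg β := deg_le_of_lead hf hb
        have h2 : deg β + deg γ = deg α := by rw [← deg_add, hmem]
        have h3 : deg γ = 0 := by omega
        have hγ0 : γ = 0 := (deg_eq_zero_iff γ).mp h3
        subst hγ0
        rw [add_zero] at hmem
        exact hne (by simp only [Prod.mk.injEq]; exact ⟨hmem, trivial⟩)
      · simp [MvPolynomial.notMem_support_iff.mp hb]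
    · intro hmem; exact absurd (Finset.HasAntidiagonal.mem_antidiagonal.mpr (by simp)) hmem
  constructor
  · rw [mem_support_iff, hcoeff]; exact mem_support_iff.mp hf.1
  · intro δ hδ hne
    obtain ⟨β, hβ, γ, hγ, rfl⟩ := Finset.mem_add.mp (MvPolynomial.support_mul f s hδ)
    by_cases hg0 : γ = 0
    · subst hg0; rw [add_zero] at hδ hne ⊢; exact hf.2 β hβ hne
    · left
      have h1 : deg α ≤ deg β := deg_le_of_lead hf hβ
      have h2 : 1 ≤ deg γ := by
        rcases Nat.eq_zero_or_pos (deg γ) with h | h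
        · exact absurd ((deg_eq_zero_iff γ).mp h) hg0
        · exact h
      have h3 : deg α < deg (β + γ) := by rw [deg_add]; omega
      exact h3

lemma mem_suppM_le {p n k : ℕ} {G : Fin k → Fin n → ZMod p} {i : Fin k} {j : Fin n}
    (h : j ∈ suppM G i) : k ≤ (j : ℕ) := by
  rw [suppM, Finset.mem_filter] at h; exact h.2.1

lemma constantCoeff_Hprod (p n k : ℕ) [Fact p.Prime] (G : Fin k → Fin n → ZMod p) (i : Fin k) :
    constantCoeff (Hprod p n k G i) = 1 := by
  rw [Hprod, map_prod]
  apply Finset.prod_eq_one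
  intro j _
  rw [map_pow, map_add, constantCoeff_X, map_one, zero_add, one_pow]

lemma vars_Hprod (p n k : ℕ) [Fact p.Prime] (G : Fin k → Fin n → ZMod p) (i : Fin k) :
    ∀ v ∈ (Hprod p n k G i).vars, k ≤ (v : ℕ) := by
  classical
  intro v hv
  rw [Hprod] at hv
  have h1 := vars_prod (s := suppM G i)
    (f := fun j => (X j + 1) ^ (p - (G i j).val)) hv
  rw [Finset.mem_biUnion] at h1
  obtain ⟨j, hj, hv2⟩ := h1
  have h2 := vars_pow (X j + 1 : MvPolynomial (Fin n) (ZMod p)) (p - (G i j).val) hv2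
  have h3 := vars_add_subset (X j : MvPolynomial (Fin n) (ZMod p)) 1 h2
  rw [vars_X, vars_one, Finset.union_empty, Finset.mem_singleton] at h3
  subst h3
  exact mem_suppM_le hj

lemma supp_Hprod_sub_one (p n k : ℕ) [Fact p.Prime] (G : Fin k → Fin n → ZMod p) (i : Fin k) :
    ∀ γ ∈ (Hprod p n k G i - 1).support, γ ≠ 0 ∧ ∀ v ∈ γ.support, k ≤ (v : ℕ) := by
  classical
  intro γ hγ
  constructor
  · rintro rfl
    rw [mem_support_iff] at hγ
    apply hγ
    have h1 : coeff 0 (Hprod p n k G i) = 1 := by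
      have := constantCoeff_Hprod p n k G i
      rwa [constantCoeff_eq] at this
    rw [coeff_sub, h1, coeff_one]
    simp
  · intro v hv
    have hvar : v ∈ (Hprod p n k G i - 1).vars := (mem_vars v).mpr ⟨γ, hγ, hv⟩
    have := vars_sub_subset (p := Hprod p n k G i) (q := 1) hvar
    rw [vars_one, Finset.union_empty] at this
    exact vars_Hprod p n k G i v this

lemma isLeadMon_stdElt (p n k : ℕ) [Fact p.Prime] (hkn : k ≤ n)
    (G : Fin k → Fin n → ZMod p) (i : Fin k) :
    IsLeadMon negDegLexGt (stdElt p n k hkn G i)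
        (Finsupp.single (Fin.castLE hkn i) 1) ∧
      coeff (Finsupp.single (Fin.castLE hkn i) 1) (stdElt p n k hkn G i) = 1 := by
  classical
  set i' : Fin n := Fin.castLE hkn i with hi'
  set α : Fin n →₀ ℕ := Finsupp.single i' 1 with hα
  set Q : MvPolynomial (Fin n) (ZMod p) := Hprod p n k G i - 1 with hQ
  have hik : (i' : ℕ) < k := i.isLt
  have hstd2 : stdElt p n k hkn G i = X i' - Q := by
    rw [stdElt_eq, hQ]; ring
  have hQsupp := supp_Hprod_sub_one p n k G i
  have hsmall : ∀ (v : Fin n), (v : ℕ) < k → ∀ β ∈ Q.support, β v = 0 := by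
    intro v hv β hβ
    by_contra hne
    have : v ∈ β.support := Finsupp.mem_support_iff.mpr hne
    have := (hQsupp β hβ).2 v this
    omega
  have hcoeffQ : coeff α Q = 0 := by
    by_contra hne
    have hαQ : α ∈ Q.support := mem_support_iff.mpr hne
    have := hsmall i' hik α hαQ
    rw [hα, Finsupp.single_eq_same] at this
    exact one_ne_zero this
  have hcoeff : coeff α (stdElt p n k hkn G i) = 1 := by
    rw [hstd2, coeff_sub, hcoeffQ, coeff_X', if_pos rfl, sub_zero]
  refine ⟨⟨?_, ?_⟩, hcoeff⟩
  · rw [mem_support_iff, hcoeff]; exact one_ne_zero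
  · intro β hβ hne
    have hβQ : β ∈ Q.support := by
      have hβ' : β ∈ (X i' - Q).support := by rw [← hstd2]; exact hβ
      have := MvPolynomial.support_sub _ (X i') Q hβ'
      rcases Finset.mem_union.mp this with h | h
      · exfalso
        rw [support_X, Finset.mem_singleton] at h
        exact hne h
      · exact h
    have hβ0 : β ≠ 0 := (hQsupp β hβQ).1
    have hdegα : deg α = 1 := by rw [hα]; exact deg_single i' 1
    have hdegβ : 1 ≤ deg β := by
      rcases Nat.eq_zero_or_pos (deg β) with h | h
      · exact absurd ((deg_eq_zero_iff β).mp h) hβ0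
      · exact h
    rcases lt_or_eq_of_le hdegβ with h | h
    · left
      have : deg α < deg β := by omega
      exact this
    · right
      constructor
      · have : deg α = deg β := by omega
        exact this
      · refine ⟨i', ?_, ?_⟩
        · intro u hu
          have hu1 : α u = 0 := by
            rw [hα, Finsupp.single_apply, if_neg]
            intro huu; rw [huu] at hu; exact lt_irrefl _ hu
          have hu2 : β u = 0 := by
            apply hsmall u ?_ β hβQ
            have : (u : ℕ) < (i' : ℕ) := hu
            omega
          rw [hu1, hu2]
        · have h1 : α i' = 1 := by rw [hα, Finsupp.single_eq_same]
          have h2 : β i' = 0 := hsmall i' hik β hβQ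
          rw [h1, h2]
          exact Nat.zero_lt_one

lemma isLeadMon_Xpow (p n k : ℕ) [Fact p.Prime] (j : Fin n) :
    IsLeadMon negDegLexGt ((X j : MvPolynomial (Fin n) (ZMod p)) ^ p)
        (Finsupp.single j p) ∧
      coeff (Finsupp.single j p) ((X j : MvPolynomial (Fin n) (ZMod p)) ^ p) = 1 := by
  classical
  have hsupp : ((X j : MvPolynomial (Fin n) (ZMod p)) ^ p).support = {Finsupp.single j p} :=
    support_X_pow j p
  have hcoeff : coeff (Finsupp.single j p) ((X j : MvPolynomial (Fin n) (ZMod p)) ^ p) = 1 := by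
    rw [X_pow_eq_monomial, coeff_monomial, if_pos rfl]
  refine ⟨⟨?_, ?_⟩, hcoeff⟩
  · rw [hsupp]; exact Finset.mem_singleton_self _
  · intro β hβ hne
    rw [hsupp, Finset.mem_singleton] at hβ
    exact absurd hβ hne


lemma gen1_eq (p n k : ℕ) [Fact p.Prime] (hkn : k ≤ n) (G : Fin k → Fin n → ZMod p) (i : Fin k) :
    (X (Fin.castLE hkn i) + 1) +
        C ((p : ZMod p) - 1) * ∏ j ∈ suppM G i, (X j + 1) ^ (p - (G i j).val) =
      stdElt p n k hkn G i := by
  have hp : ((p : ZMod p) - 1) = -1 := by rw [ZMod.natCast_self]; ring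
  rw [hp, stdElt_eq, map_neg, map_one, Hprod]
  ring

lemma gen2_eq (p n k : ℕ) [Fact p.Prime] (j : Fin n) :
    ((X j : MvPolynomial (Fin n) (ZMod p)) + 1) ^ p + C ((p : ZMod p) - 1) = X j ^ p := by
  have hp : ((p : ZMod p) - 1) = -1 := by rw [ZMod.natCast_self]; ring
  rw [hp, map_neg, map_one, add_pow_char, one_pow]
  ring

lemma codeIdeal'_eq_span (p n k : ℕ) [Fact p.Prime] (hkn : k ≤ n)
    (G : Fin k → Fin n → ZMod p) :
    codeIdeal' p n k hkn G = Ideal.span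
      ({f | ∃ i : Fin k, f = stdElt p n k hkn G i} ∪
        {f | ∃ i : Fin n, k ≤ (i : ℕ) ∧ f = X i ^ p}) := by
  rw [codeIdeal']
  congr 1
  ext f
  simp only [Set.mem_union, Set.mem_setOf_eq]
  constructor
  · rintro (⟨i, rfl⟩ | ⟨i, hi, rfl⟩)
    · exact Or.inl ⟨i, gen1_eq p n k hkn G i⟩
    · exact Or.inr ⟨i, hi, gen2_eq p n k i⟩
  · rintro (⟨i, rfl⟩ | ⟨i, hi, rfl⟩)
    · exact Or.inl ⟨i, (gen1_eq p n k hkn G i).symm⟩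
    · exact Or.inr ⟨i, hi, (gen2_eq p n k i).symm⟩

/-- The monomial ideal of polynomials all of whose monomials have some exponent `≥ p`
in a variable of index `≥ k`. -/
def monIdeal (p n k : ℕ) [Fact p.Prime] : Ideal (MvPolynomial (Fin n) (ZMod p)) where
  carrier := {f | ∀ γ ∈ f.support, ∃ j : Fin n, k ≤ (j : ℕ) ∧ p ≤ γ j}
  zero_mem' := by intro γ hγ; simp at hγ
  add_mem' := by
    classical
    intro a b ha hb γ hγ
    rcases Finset.mem_union.mp (MvPolynomial.support_add hγ) with h | h
    exacts [ha γ h, hb γ h]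
  smul_mem' := by
    classical
    intro c f hf γ hγ
    rw [smul_eq_mul] at hγ
    obtain ⟨δ, hδ, ε, hε, rfl⟩ := Finset.mem_add.mp (MvPolynomial.support_mul c f hγ)
    obtain ⟨j, hj, hpj⟩ := hf ε hε
    exact ⟨j, hj, le_trans hpj (by simp)⟩

lemma minDeg_prod {p n : ℕ} (s : Finset (Fin n)) (F : Fin n → MvPolynomial (Fin n) (ZMod p))
    (E : Fin n → ℕ) (h : ∀ v ∈ s, MinDeg 1 (F v)) :
    MinDeg (∑ v ∈ s, E v) (∏ v ∈ s, F v ^ E v) := by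
  classical
  induction s using Finset.cons_induction with
  | empty => simpa using minDeg_zero (1 : MvPolynomial (Fin n) (ZMod p))
  | cons a s ha ih =>
      rw [Finset.sum_cons, Finset.prod_cons]
      exact minDeg_mul (minDeg_pow (h a (Finset.mem_cons_self a s)) (E a))
        (ih fun v hv => h v (Finset.mem_cons_of_mem hv))

lemma key_lemma (p n k : ℕ) [Fact p.Prime] (hkn : k ≤ n) (G : Fin k → Fin n → ZMod p)
    (g : MvPolynomial (Fin n) (ZMod p)) (hg : g ∈ codeIdeal' p n k hkn G)
    (α : Fin n →₀ ℕ) (hlm : IsLeadMon negDegLexGt g α) :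
    (∃ v : Fin n, (v : ℕ) < k ∧ 0 < α v) ∨ (∃ j : Fin n, k ≤ (j : ℕ) ∧ p ≤ α j) := by
  classical
  by_contra hcon
  push_neg at hcon
  obtain ⟨hc1, hc2⟩ := hcon
  have hc1' : ∀ v : Fin n, (v : ℕ) < k → α v = 0 := by
    intro v hv
    have := hc1 v hv
    omega
  set Fsub : Fin n → MvPolynomial (Fin n) (ZMod p) :=
    fun v => if h : (v : ℕ) < k then Hprod p n k G ⟨(v : ℕ), h⟩ - 1 else X v with hFsub
  have hFfix : ∀ j : Fin n, k ≤ (j : ℕ) → Fsub j = X j := by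
    intro j hj
    rw [hFsub]
    exact dif_neg (by omega)
  have hψH : ∀ i : Fin k, aeval Fsub (Hprod p n k G i) = Hprod p n k G i := by
    intro i
    rw [Hprod, map_prod]
    apply Finset.prod_congr rfl
    intro j hj
    rw [map_pow, map_add, map_one, aeval_X, hFfix j (mem_suppM_le hj)]
  have hψstd : ∀ i : Fin k, aeval Fsub (stdElt p n k hkn G i) = 0 := by
    intro i
    rw [stdElt_eq, map_sub, map_add, map_one, aeval_X, hψH]
    have hFi : Fsub (Fin.castLE hkn i) = Hprod p n k G i - 1 := by
      simp only [hFsub]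
      rw [dif_pos (show ((Fin.castLE hkn i : Fin n) : ℕ) < k from i.isLt)]
      congr 2
    rw [hFi]
    ring
  have hψpow : ∀ j : Fin n, k ≤ (j : ℕ) →
      aeval Fsub ((X j : MvPolynomial (Fin n) (ZMod p)) ^ p) = X j ^ p := by
    intro j hj
    rw [map_pow, aeval_X, hFfix j hj]
  -- the image of g lies in the monomial ideal
  have hψmem : aeval Fsub g ∈ monIdeal p n k := by
    have h1 : aeval Fsub g ∈ Ideal.map (aeval Fsub : MvPolynomial (Fin n) (ZMod p) →ₐ[ZMod p]
        MvPolynomial (Fin n) (ZMod p)).toRingHom (codeIdeal' p n k hkn G) :=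
      Ideal.mem_map_of_mem _ hg
    have h2 : Ideal.map (aeval Fsub : MvPolynomial (Fin n) (ZMod p) →ₐ[ZMod p]
        MvPolynomial (Fin n) (ZMod p)).toRingHom (codeIdeal' p n k hkn G) ≤ monIdeal p n k := by
      rw [codeIdeal'_eq_span, Ideal.map_span]
      apply Ideal.span_le.mpr
      rintro _ ⟨f, hf, rfl⟩
      rcases hf with ⟨i, rfl⟩ | ⟨j, hj, rfl⟩
      · show aeval Fsub _ ∈ monIdeal p n k
        rw [hψstd i]
        exact (monIdeal p n k).zero_mem
      · show aeval Fsub _ ∈ monIdeal p n k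
        rw [hψpow j hj]
        intro γ hγ
        rw [support_X_pow, Finset.mem_singleton] at hγ
        subst hγ
        exact ⟨j, hj, by simp⟩
    exact h2 h1
  -- every degree-`deg α` monomial of `g` avoids the first `k` variables
  have hA : ∀ β ∈ g.support, deg β = deg α → ∀ v : Fin n, (v : ℕ) < k → β v = 0 := by
    intro β hβ hdeg v hv
    by_cases hba : β = α
    · subst hba; exact hc1' v hv
    · rcases hlm.2 β hβ hba with h1 | h2
      · exact absurd hdeg (by have : deg α < deg β := h1; omega)
      · obtain ⟨w, hw1, hw2⟩ := h2.2
        have hαw : 0 < α w := Nat.lt_of_le_of_lt (Nat.zero_le _) hw2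
        have hkw : k ≤ (w : ℕ) := by
          by_contra hcw
          rw [hc1' w (by omega)] at hαw
          exact Nat.lt_irrefl 0 hαw
        have hvw : v < w := by
          rw [Fin.lt_def]
          omega
        rw [← hw1 v hvw]
        exact hc1' v hv
  have hA2 : ∀ β ∈ g.support, deg α ≤ deg β := fun β hβ => deg_le_of_lead hlm hβ
  have hmin1 : ∀ v : Fin n, MinDeg 1 (Fsub v) := by
    intro v
    simp only [hFsub]
    by_cases hv : (v : ℕ) < k
    · rw [dif_pos hv]
      intro γ hγ
      have := (supp_Hprod_sub_one p n k G ⟨(v : ℕ), hv⟩ γ hγ).1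
      rcases Nat.eq_zero_or_pos (deg γ) with h | h
      · exact absurd ((deg_eq_zero_iff γ).mp h) this
      · exact h
    · rw [dif_neg hv]
      intro γ hγ
      rw [support_X, Finset.mem_singleton] at hγ
      subst hγ
      rw [deg_single]
  have hdegsupp : ∀ β : Fin n →₀ ℕ, deg β = ∑ v ∈ β.support, β v := by
    intro β
    rw [deg]
    rw [Finset.sum_subset (Finset.subset_univ β.support)]
    intro x _ hx
    exact Finsupp.notMem_support_iff.mp hx
  have hψlow : ∀ (β : Fin n →₀ ℕ) (c : ZMod p), deg α < deg β →
      coeff α (aeval Fsub (monomial β c)) = 0 := by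
    intro β c hd
    rw [aeval_monomial]
    have hmd : MinDeg (deg β) (Finsupp.prod β fun v e => Fsub v ^ e) := by
      have h1 : MinDeg (∑ v ∈ β.support, β v) (∏ v ∈ β.support, Fsub v ^ β v) :=
        minDeg_prod β.support Fsub β (fun v _ => hmin1 v)
      rw [← hdegsupp β] at h1
      rw [Finsupp.prod]
      exact h1
    have hmd2 : MinDeg (deg β) (algebraMap (ZMod p) (MvPolynomial (Fin n) (ZMod p)) c *
        Finsupp.prod β fun v e => Fsub v ^ e) := by
      have := minDeg_mul (minDeg_zero (algebraMap (ZMod p) (MvPolynomial (Fin n) (ZMod p)) c)) hmd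
      rwa [zero_add] at this
    by_contra hne
    have hmem : α ∈ (algebraMap (ZMod p) (MvPolynomial (Fin n) (ZMod p)) c *
        Finsupp.prod β fun v e => Fsub v ^ e).support := mem_support_iff.mpr hne
    have := hmd2 α hmem
    omega
  have hpsid : ∀ (β : Fin n →₀ ℕ) (c : ZMod p), (∀ v : Fin n, (v : ℕ) < k → β v = 0) →
      aeval Fsub (monomial β c) = monomial β c := by
    intro β c hβ
    rw [aeval_monomial]
    have h1 : (Finsupp.prod β fun v e => Fsub v ^ e) = ∏ v ∈ β.support, X v ^ β v := by
      rw [Finsupp.prod]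
      apply Finset.prod_congr rfl
      intro v hv
      have hv0 : β v ≠ 0 := Finsupp.mem_support_iff.mp hv
      have hkv : k ≤ (v : ℕ) := by
        by_contra hc
        exact hv0 (hβ v (by omega))
      rw [hFfix v hkv]
    rw [h1, prod_X_pow_eq_monomial, algebraMap_eq, C_mul_monomial, mul_one]
  have hcoeffψ : coeff α (aeval Fsub g) = coeff α g := by
    conv_lhs => rw [← support_sum_monomial_coeff g]
    rw [map_sum, coeff_sum]
    rw [Finset.sum_eq_single_of_mem α hlm.1]
    · rw [hpsid α (coeff α g) hc1', coeff_monomial, if_pos rfl]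
    · intro β hβ hne
      rcases lt_or_eq_of_le (hA2 β hβ) with h | h
      · exact hψlow β (coeff β g) h
      · rw [hpsid β (coeff β g) (hA β hβ h.symm), coeff_monomial, if_neg hne]
  have hαsupp : α ∈ (aeval Fsub g).support := by
    rw [mem_support_iff, hcoeffψ]
    exact mem_support_iff.mp hlm.1
  obtain ⟨j, hj, hpj⟩ := hψmem α hαsupp
  have := hc2 j hj
  omega

lemma mono_mem (p n k : ℕ) [Fact p.Prime] (hkn : k ≤ n) (α : Fin n →₀ ℕ) (c : ZMod p)
    (h : (∃ v : Fin n, (v : ℕ) < k ∧ 0 < α v) ∨ (∃ j : Fin n, k ≤ (j : ℕ) ∧ p ≤ α j)) :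
    (monomial α c : MvPolynomial (Fin n) (ZMod p)) ∈ Ideal.span
      ({f | ∃ i : Fin k, f = X (Fin.castLE hkn i)} ∪
        {f | ∃ i : Fin n, k ≤ (i : ℕ) ∧ f = (X i : MvPolynomial (Fin n) (ZMod p)) ^ p}) := by
  classical
  rcases h with ⟨v, hv, hα⟩ | ⟨j, hj, hα⟩
  · have hX : (X v : MvPolynomial (Fin n) (ZMod p)) ∈ Ideal.span
        ({f | ∃ i : Fin k, f = X (Fin.castLE hkn i)} ∪
          {f | ∃ i : Fin n, k ≤ (i : ℕ) ∧ f = (X i : MvPolynomial (Fin n) (ZMod p)) ^ p}) := by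
      apply Ideal.subset_span
      left
      exact ⟨⟨(v : ℕ), hv⟩, by congr 1⟩
    have hXv : (X v : MvPolynomial (Fin n) (ZMod p)) = monomial (Finsupp.single v 1) 1 := by
      rw [← X_pow_eq_monomial, pow_one]
    have hsum : (α - Finsupp.single v 1) + Finsupp.single v 1 = α := by
      ext w
      rw [Finsupp.add_apply, Finsupp.tsub_apply]
      rcases eq_or_ne w v with rfl | hw
      · rw [Finsupp.single_eq_same]; omega
      · rw [Finsupp.single_eq_of_ne' (Ne.symm hw)]; omega
    have heq : (monomial α c : MvPolynomial (Fin n) (ZMod p)) =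
        monomial (α - Finsupp.single v 1) c * X v := by
      rw [hXv, monomial_mul, mul_one, hsum]
    rw [heq]
    exact Ideal.mul_mem_left _ _ hX
  · have hX : ((X j : MvPolynomial (Fin n) (ZMod p)) ^ p) ∈ Ideal.span
        ({f | ∃ i : Fin k, f = X (Fin.castLE hkn i)} ∪
          {f | ∃ i : Fin n, k ≤ (i : ℕ) ∧ f = (X i : MvPolynomial (Fin n) (ZMod p)) ^ p}) := by
      apply Ideal.subset_span
      right
      exact ⟨j, hj, rfl⟩
    have hsum : (α - Finsupp.single j p) + Finsupp.single j p = α := by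
      ext w
      rw [Finsupp.add_apply, Finsupp.tsub_apply]
      rcases eq_or_ne w j with rfl | hw
      · rw [Finsupp.single_eq_same]; omega
      · rw [Finsupp.single_eq_of_ne' (Ne.symm hw)]; omega
    have heq : (monomial α c : MvPolynomial (Fin n) (ZMod p)) =
        monomial (α - Finsupp.single j p) c * (X j ^ p) := by
      rw [X_pow_eq_monomial, monomial_mul, mul_one, hsum]
    rw [heq]
    exact Ideal.mul_mem_left _ _ hX


/-- The main theorem: `S = {A_i : 1 ≤ i ≤ k} ∪ {X_i^p : k+1 ≤ i ≤ n}` is a standard basis of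
`I = I_C'·Loc_>(F_p[X])` with respect to the negative degree lexicographic order: its members
lie in `I`, their leading terms generate the leading-term ideal of `I`, and in particular that
leading-term ideal is `⟨X_1,...,X_k, X_{k+1}^p,...,X_n^p⟩`. -/
theorem standard_basis_code_ideal (p n k : ℕ) [Fact p.Prime] (hkn : k ≤ n)
    (G : Fin k → Fin n → ZMod p)
    (hstd : ∀ i j : Fin k, G i (Fin.castLE hkn j) = if i = j then 1 else 0) :
    let Sset : Set (MvPolynomial (Fin n) (ZMod p)) :=
      {f | ∃ i : Fin k, f = stdElt p n k hkn G i} ∪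
        {f | ∃ i : Fin n, k ≤ (i : ℕ) ∧ f = X i ^ p}
    let Loc := Localization (unitSet n (ZMod p))
    let I : Ideal Loc :=
      Ideal.map (algebraMap (MvPolynomial (Fin n) (ZMod p)) Loc) (codeIdeal' p n k hkn G)
    let ltI : Ideal (MvPolynomial (Fin n) (ZMod p)) :=
      Ideal.span (LTset {f | algebraMap (MvPolynomial (Fin n) (ZMod p)) Loc f ∈ I ∧ f ≠ 0})
    (∀ f ∈ Sset, algebraMap (MvPolynomial (Fin n) (ZMod p)) Loc f ∈ I) ∧
    Ideal.span (LTset Sset) = ltI ∧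
    ltI = Ideal.span ({f | ∃ i : Fin k, f = X (Fin.castLE hkn i)} ∪
      {f | ∃ i : Fin n, k ≤ (i : ℕ) ∧ f = (X i : MvPolynomial (Fin n) (ZMod p)) ^ p}) := by
  classical
  haveI : Fact (1 < p) := ⟨(Fact.out : p.Prime).one_lt⟩
  intro Sset Loc I ltI
  have hspan : codeIdeal' p n k hkn G = Ideal.span Sset := codeIdeal'_eq_span p n k hkn G
  have hmemS : ∀ f ∈ Sset, f ∈ codeIdeal' p n k hkn G := by
    intro f hf
    rw [hspan]
    exact Ideal.subset_span hf
  have part1 : ∀ f ∈ Sset, algebraMap (MvPolynomial (Fin n) (ZMod p)) Loc f ∈ I := by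
    intro f hf
    exact Ideal.mem_map_of_mem _ (hmemS f hf)
  have hM : unitSet n (ZMod p) ≤ nonZeroDivisors (MvPolynomial (Fin n) (ZMod p)) := by
    intro s hs
    have hs1 : constantCoeff s = 1 := by
      have hs' : constantCoeff s ∈ (⊥ : Submonoid (ZMod p)) := hs
      rwa [Submonoid.mem_bot] at hs'
    apply mem_nonZeroDivisors_of_ne_zero
    intro h0
    rw [h0, map_zero] at hs1
    exact zero_ne_one hs1
  have hback : ∀ f : MvPolynomial (Fin n) (ZMod p),
      algebraMap (MvPolynomial (Fin n) (ZMod p)) Loc f ∈ I →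
      ∀ α : Fin n →₀ ℕ, IsLeadMon negDegLexGt f α →
      ((∃ v : Fin n, (v : ℕ) < k ∧ 0 < α v) ∨ (∃ j : Fin n, k ≤ (j : ℕ) ∧ p ≤ α j)) := by
    intro f hf α hlm
    rw [IsLocalization.mem_map_algebraMap_iff (unitSet n (ZMod p)) Loc] at hf
    obtain ⟨⟨a, s⟩, he⟩ := hf
    rw [← map_mul] at he
    have heq : f * (s : MvPolynomial (Fin n) (ZMod p)) = (a : MvPolynomial (Fin n) (ZMod p)) :=
      IsLocalization.injective Loc hM he
    have hs1 : constantCoeff (s : MvPolynomial (Fin n) (ZMod p)) = 1 := by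
      have h2 : constantCoeff (s : MvPolynomial (Fin n) (ZMod p)) ∈ (⊥ : Submonoid (ZMod p)) := s.2
      rwa [Submonoid.mem_bot] at h2
    have hlm2 := isLeadMon_mul hs1 hlm
    rw [heq] at hlm2
    exact key_lemma p n k hkn G _ a.2 α hlm2
  have hGL : Ideal.span ({f | ∃ i : Fin k, f = X (Fin.castLE hkn i)} ∪
      {f | ∃ i : Fin n, k ≤ (i : ℕ) ∧ f = (X i : MvPolynomial (Fin n) (ZMod p)) ^ p}) ≤
      Ideal.span (LTset Sset) := by
    apply Ideal.span_le.mpr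
    rintro f (⟨i, rfl⟩ | ⟨j, hj, rfl⟩)
    · apply Ideal.subset_span
      refine ⟨stdElt p n k hkn G i, Or.inl ⟨i, rfl⟩, Finsupp.single (Fin.castLE hkn i) 1,
        (isLeadMon_stdElt p n k hkn G i).1, ?_⟩
      rw [(isLeadMon_stdElt p n k hkn G i).2, ← X_pow_eq_monomial, pow_one]
    · apply Ideal.subset_span
      refine ⟨(X j : MvPolynomial (Fin n) (ZMod p)) ^ p, Or.inr ⟨j, hj, rfl⟩,
        Finsupp.single j p, (isLeadMon_Xpow p n k j).1, ?_⟩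
      rw [(isLeadMon_Xpow p n k j).2, ← X_pow_eq_monomial]
  have hLT1 : Ideal.span (LTset Sset) ≤ ltI := by
    apply Ideal.span_mono
    rintro m ⟨f, hf, α, hlm, rfl⟩
    refine ⟨f, ⟨part1 f hf, ?_⟩, α, hlm, rfl⟩
    intro h0
    rw [h0] at hlm
    simpa using hlm.1
  have hLT2 : ltI ≤ Ideal.span ({f | ∃ i : Fin k, f = X (Fin.castLE hkn i)} ∪
      {f | ∃ i : Fin n, k ≤ (i : ℕ) ∧ f = (X i : MvPolynomial (Fin n) (ZMod p)) ^ p}) := by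
    apply Ideal.span_le.mpr
    rintro m ⟨f, ⟨hfI, hf0⟩, α, hlm, rfl⟩
    exact mono_mem p n k hkn α _ (hback f hfI α hlm)
  exact ⟨part1, le_antisymm hLT1 (le_trans hLT2 hGL), le_antisymm hLT2 (le_trans hGL hLT1)⟩

end
end

section
/- (Mora weak normal form.) Let > be a local order on K[X_1,...,X_n] and f, f_1,...,f_s nonzero polynomials. Then there exist polynomials u, a_1,...,a_s, h ∈ K[X] with lt(u) = 1 (so u is a unit in Loc_>(K[X])) such that u·f = a_1 f_1 + ... + a_s f_s + h, where lt(f) ≥ lt(a_i)·lt(f_i) whenever a_i ≠ 0, and h = 0 or lt(h) is not divisible by any lt(f_i). -/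
open MvPolynomial

def IsSemigroupOrder {σ : Type*} (r : (σ →₀ ℕ) → (σ →₀ ℕ) → Prop) : Prop :=
  Transitive r ∧ (∀ a b, a ≠ b → r a b ∨ r b a) ∧ (∀ a b, r a b → ¬ r b a) ∧
    ∀ a b c, r a b → r (a + c) (b + c)

def IsLocalOrder {σ : Type*} (r : (σ →₀ ℕ) → (σ →₀ ℕ) → Prop) : Prop :=
  IsSemigroupOrder r ∧ ∀ i : σ, r 0 (Finsupp.single i 1)

namespace MoraAux

variable {n : ℕ}

abbrev Mon (n : ℕ) := Fin n →₀ ℕ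

def mdeg (α : Mon n) : ℕ := α.sum fun _ e => e

lemma mdeg_add (α β : Mon n) : mdeg (α + β) = mdeg α + mdeg β := by
  unfold mdeg
  exact Finsupp.sum_add_index' (fun _ => rfl) (fun _ _ _ => rfl)

lemma mdeg_mono {α β : Mon n} (h : α ≤ β) : mdeg α ≤ mdeg β := by
  have : β = α + (β - α) := (add_tsub_cancel_of_le h).symm
  rw [this, mdeg_add]; omega

lemma mdeg_eq_zero {α : Mon n} (h : mdeg α = 0) : α = 0 := by
  ext i
  have h1 : α i ≤ mdeg α := by
    by_cases hi : i ∈ α.support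
    · exact Finset.single_le_sum (f := fun j => α j) (fun _ _ => Nat.zero_le _) hi
    · simp [Finsupp.notMem_support_iff.1 hi]
  simp; omega

lemma mdeg_single (i : Fin n) : mdeg (Finsupp.single i 1) = 1 := by
  unfold mdeg; rw [Finsupp.sum_single_index]; rfl

variable {r : Mon n → Mon n → Prop}

section Order

variable (hr : IsLocalOrder r)
include hr

lemma rtrans {a b c : Mon n} (h1 : r a b) (h2 : r b c) : r a c := hr.1.1 h1 h2
lemma rtot (a b : Mon n) (h : a ≠ b) : r a b ∨ r b a := hr.1.2.1 a b h
lemma rasymm {a b : Mon n} (h : r a b) : ¬ r b a := hr.1.2.2.1 a b h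
lemma radd (a b c : Mon n) (h : r a b) : r (a + c) (b + c) := hr.1.2.2.2 a b c h
lemma rirr (a : Mon n) : ¬ r a a := fun h => hr.1.2.2.1 a a h h

lemma rne {a b : Mon n} (h : r a b) : a ≠ b := by
  rintro rfl; exact rirr hr a h

lemma rcancel {a b c : Mon n} (h : r (a + c) (b + c)) : r a b := by
  rcases eq_or_ne a b with rfl | hne
  · exact absurd h (rirr hr _)
  rcases rtot hr a b hne with h' | h'
  · exact h'
  · exact absurd h (rasymm hr (radd hr b a c h'))

lemma rzero : ∀ γ : Mon n, γ ≠ 0 → r 0 γ := by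
  have key : ∀ k : ℕ, ∀ γ : Mon n, mdeg γ ≤ k → γ ≠ 0 → r 0 γ := by
    intro k
    induction k with
    | zero => intro γ h1 h2; exact absurd (mdeg_eq_zero (Nat.le_zero.1 h1)) h2
    | succ k ih =>
      intro γ h1 h2
      have : ∃ i, γ i ≠ 0 := by
        by_contra hc; push_neg at hc; exact h2 (Finsupp.ext fun i => hc i)
      obtain ⟨i, hi⟩ := this
      have hle : Finsupp.single i 1 ≤ γ := by
        rw [Finsupp.single_le_iff]; omega
      have hγ : Finsupp.single i 1 + (γ - Finsupp.single i 1) = γ := add_tsub_cancel_of_le hle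
      set γ' := γ - Finsupp.single i 1 with hγ'
      have step : r γ' γ := by
        have := radd hr _ _ γ' (hr.2 i)
        rw [zero_add, hγ] at this; exact this
      rcases eq_or_ne γ' 0 with h0 | h0
      · rw [← h0]; exact step
      · have hm : mdeg γ' ≤ k := by
          have := mdeg_add (Finsupp.single i 1) γ'
          rw [hγ, mdeg_single] at this; omega
        exact rtrans hr (ih γ' hm h0) step
  exact fun γ h => key (mdeg γ) γ le_rfl h

lemma exists_max (S : Finset (Mon n)) (hS : S.Nonempty) :
    ∃ α ∈ S, ∀ β ∈ S, β ≠ α → r α β := by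
  classical
  induction S using Finset.cons_induction with
  | empty => exact absurd hS (by simp)
  | cons a S ha ih =>
    rcases S.eq_empty_or_nonempty with rfl | hS'
    · exact ⟨a, by simp, by simp⟩
    obtain ⟨α, hαS, hα⟩ := ih hS'
    have hne : a ≠ α := fun h => ha (h ▸ hαS)
    rcases rtot hr a α hne with h | h
    · refine ⟨a, Finset.mem_cons_self _ _, ?_⟩
      intro β hβ hβa
      rcases Finset.mem_cons.1 hβ with rfl | hβS
      · exact absurd rfl hβa
      rcases eq_or_ne β α with rfl | hβα
      · exact h
      · exact rtrans hr h (hα β hβS hβα)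
    · refine ⟨α, Finset.mem_cons.2 (Or.inr hαS), ?_⟩
      intro β hβ hβα
      rcases Finset.mem_cons.1 hβ with rfl | hβS
      · exact h
      · exact hα β hβS hβα

end Order

end MoraAux

namespace MoraAux

variable {n : ℕ} {K : Type*} [Field K] {r : Mon n → Mon n → Prop}

section Poly

variable (hr : IsLocalOrder r)
include hr

lemma lead_exists {p : MvPolynomial (Fin n) K} (hp : p ≠ 0) : ∃ α, IsLeadMon r p α := by
  obtain ⟨α, hα, hmax⟩ := exists_max hr p.support (by
    rw [Finset.nonempty_iff_ne_empty, Ne, MvPolynomial.support_eq_empty]; exact hp)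
  exact ⟨α, hα, hmax⟩

lemma lead_unique {p : MvPolynomial (Fin n) K} {α β : Mon n}
    (h1 : IsLeadMon r p α) (h2 : IsLeadMon r p β) : α = β := by
  by_contra hne
  exact rasymm hr (h1.2 β h2.1 (Ne.symm hne)) (h2.2 α h1.1 hne)

lemma lead_ne_zero {p : MvPolynomial (Fin n) K} {α : Mon n} (h : IsLeadMon r p α) : p ≠ 0 := by
  intro h0; rw [h0] at h; simpa using h.1

lemma lead_of_const {u : MvPolynomial (Fin n) K} (hu : coeff 0 u ≠ 0) : IsLeadMon r u 0 :=
  ⟨MvPolynomial.mem_support_iff.2 hu, fun β _ hβ => rzero hr β hβ⟩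

/-- `Ble ω p` : every monomial of `p` is `≤ ω` in the order `r`. -/
def Ble (r : Mon n → Mon n → Prop) (ω : Mon n) (p : MvPolynomial (Fin n) K) : Prop :=
  ∀ β ∈ p.support, β = ω ∨ r ω β

omit hr in
lemma Ble_sub {ω : Mon n} {p q : MvPolynomial (Fin n) K}
    (hp : Ble r ω p) (hq : Ble r ω q) : Ble r ω (p - q) := by
  classical
  intro β hβ
  rcases Finset.mem_union.1 (MvPolynomial.support_sub _ p q hβ) with h | h
  · exact hp β h
  · exact hq β h

omit hr in
lemma Ble_add {ω : Mon n} {p q : MvPolynomial (Fin n) K}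
    (hp : Ble r ω p) (hq : Ble r ω q) : Ble r ω (p + q) := by
  classical
  intro β hβ
  rcases Finset.mem_union.1 (MvPolynomial.support_add hβ) with h | h
  · exact hp β h
  · exact hq β h

omit hr in
lemma Ble_lead {p : MvPolynomial (Fin n) K} {α : Mon n} (h : IsLeadMon r p α) : Ble r α p := by
  intro β hβ
  rcases eq_or_ne β α with rfl | hne
  · exact Or.inl rfl
  · exact Or.inr (h.2 β hβ hne)

lemma Ble_trans {ω ω' : Mon n} {p : MvPolynomial (Fin n) K}
    (hp : Ble r ω p) (h : ω = ω' ∨ r ω' ω) : Ble r ω' p := by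
  intro β hβ
  rcases hp β hβ with rfl | hβ'
  · exact h
  · rcases h with rfl | h'
    · exact Or.inr hβ'
    · exact Or.inr (rtrans hr h' hβ')

omit hr in
lemma support_monomial_mul {γ : Mon n} {c : K} {p : MvPolynomial (Fin n) K} {β : Mon n}
    (hβ : β ∈ (monomial γ c * p).support) : ∃ d ∈ p.support, β = γ + d := by
  classical
  have := MvPolynomial.support_mul (monomial γ c) p hβ
  rw [Finset.mem_add] at this
  obtain ⟨x, hx, d, hd, hxd⟩ := this
  have hx' : x = γ := by
    have := MvPolynomial.support_monomial (s := γ) (a := c) ▸ hx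
    by_cases hc : c = 0
    · simp [hc] at this
    · simp [hc] at this; exact this
  exact ⟨d, hd, by rw [← hxd, hx']⟩

/-- Monomials of `monomial γ c * p` are `≤ γ + δ` if those of `p` are `≤ δ`. -/
lemma Ble_monomial_mul {γ δ : Mon n} {c : K} {p : MvPolynomial (Fin n) K}
    (hp : Ble r δ p) : Ble r (γ + δ) (monomial γ c * p) := by
  intro β hβ
  obtain ⟨d, hd, rfl⟩ := support_monomial_mul hβ
  rcases hp d hd with rfl | h
  · exact Or.inl rfl
  · exact Or.inr (by
      have := radd hr δ d γ h
      rwa [add_comm δ γ, add_comm d γ] at this)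

/-- If `γ ≠ 0`, multiplication by `monomial γ c` keeps monomials strictly below `ω`
(hence still `≤ ω`). -/
lemma Ble_monomial_mul' {γ ω : Mon n} {c : K} {p : MvPolynomial (Fin n) K}
    (hγ : γ ≠ 0) (hp : Ble r ω p) : Ble r ω (monomial γ c * p) := by
  have h1 : Ble r (γ + ω) (monomial γ c * p) := Ble_monomial_mul hr hp
  have h2 : r ω (γ + ω) := by
    have := radd hr 0 γ ω (rzero hr γ hγ)
    rwa [zero_add] at this
  exact Ble_trans hr h1 (Or.inr h2)

omit hr in
lemma coeff_zero_monomial_mul {γ : Mon n} {c : K} {p : MvPolynomial (Fin n) K}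
    (hγ : γ ≠ 0) : coeff 0 (monomial γ c * p) = 0 := by
  by_contra hc
  obtain ⟨d, _, hd⟩ := support_monomial_mul (MvPolynomial.mem_support_iff.2 hc)
  have : γ = 0 := by
    ext i
    have := DFunLike.congr_fun hd i
    simp at this ⊢
    omega
  exact hγ this

lemma lead_mul {p q : MvPolynomial (Fin n) K} {α β : Mon n}
    (hp : IsLeadMon r p α) (hq : IsLeadMon r q β) : IsLeadMon r (p * q) (α + β) := by
  classical
  have hcp : coeff α p ≠ 0 := MvPolynomial.mem_support_iff.1 hp.1
  have hcq : coeff β q ≠ 0 := MvPolynomial.mem_support_iff.1 hq.1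
  have key : ∀ c d : Mon n, c ∈ p.support → d ∈ q.support → c + d = α + β →
      c = α ∧ d = β := by
    intro c d hc hd hcd
    rcases eq_or_ne c α with rfl | hne
    · constructor; rfl
      exact add_left_cancel hcd
    have h1 : r α c := hp.2 c hc hne
    have h2 : r (α + d) (c + d) := radd hr α c d h1
    rw [hcd] at h2
    rcases eq_or_ne d β with rfl | hdβ
    · exact absurd h2 (rirr hr _)
    have h3 : r β d := hq.2 d hd hdβ
    have h4 : r (α + β) (α + d) := by
      have := radd hr β d α h3
      rwa [add_comm β α, add_comm d α] at this
    exact absurd (rtrans hr h4 h2) (rirr hr _)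
  constructor
  · rw [MvPolynomial.mem_support_iff, MvPolynomial.coeff_mul]
    have hsum : ∑ x ∈ Finset.HasAntidiagonal.antidiagonal (α + β), coeff x.1 p * coeff x.2 q
        = coeff α p * coeff β q := by
      apply Finset.sum_eq_single_of_mem (α, β) (Finset.HasAntidiagonal.mem_antidiagonal.2 rfl)
      rintro ⟨c, d⟩ hmem hne
      rw [Finset.HasAntidiagonal.mem_antidiagonal] at hmem
      by_contra hcd
      have hc : c ∈ p.support := MvPolynomial.mem_support_iff.2 (left_ne_zero_of_mul hcd)
      have hd : d ∈ q.support := MvPolynomial.mem_support_iff.2 (right_ne_zero_of_mul hcd)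
      obtain ⟨rfl, rfl⟩ := key c d hc hd hmem
      exact hne rfl
    rw [hsum]
    exact mul_ne_zero hcp hcq
  · intro ω hω hωne
    have := MvPolynomial.support_mul p q hω
    rw [Finset.mem_add] at this
    obtain ⟨c, hc, d, hd, hcd⟩ := this
    subst hcd
    have hnotboth : ¬ (c = α ∧ d = β) := by
      rintro ⟨rfl, rfl⟩; exact hωne rfl
    rcases eq_or_ne c α with rfl | hne
    · have hdβ : d ≠ β := fun h => hnotboth ⟨rfl, h⟩
      have := radd hr β d c (hq.2 d hd hdβ)
      rwa [add_comm β c, add_comm d c] at this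
    · have h1 : r (α + d) (c + d) := radd hr α c d (hp.2 c hc hne)
      rcases eq_or_ne d β with rfl | hdβ
      · exact h1
      · have h2 : r (α + β) (α + d) := by
          have := radd hr β d α (hq.2 d hd hdβ)
          rwa [add_comm β α, add_comm d α] at this
        exact rtrans hr h2 h1

end Poly

end MoraAux

namespace Mora

open MoraAux

variable {n s : ℕ} {K : Type*} [Field K]

/-- One reduction step. -/
lemma reduce {r : Mon n → Mon n → Prop} (hr : IsLocalOrder r)
    {h g : MvPolynomial (Fin n) K} {α δ : Mon n}
    (hh : IsLeadMon r h α) (hg : IsLeadMon r g δ) (hdiv : δ ≤ α) :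
    (∀ β ∈ (h - monomial (α - δ) (coeff α h / coeff δ g) * g).support, r α β) ∧
    (h - monomial (α - δ) (coeff α h / coeff δ g) * g).totalDegree
      ≤ max h.totalDegree (mdeg (α - δ) + g.totalDegree) := by
  classical
  set c := coeff α h / coeff δ g with hc
  set m := monomial (α - δ) c with hm
  set h' := h - m * g with hh'
  have hαδ : (α - δ) + δ = α := tsub_add_cancel_of_le hdiv
  have hcg : coeff δ g ≠ 0 := MvPolynomial.mem_support_iff.1 hg.1
  have hcoeff : coeff α (m * g) = coeff α h := by
    have h1 : coeff ((α - δ) + δ) (monomial (α - δ) c * g) = c * coeff δ g :=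
      MvPolynomial.coeff_monomial_mul _ _ _ _
    rw [hαδ] at h1
    rw [hm, h1, hc, div_mul_cancel₀ _ hcg]
  have hzero : coeff α h' = 0 := by
    rw [hh', MvPolynomial.coeff_sub, hcoeff, sub_self]
  constructor
  · intro β hβ
    have hβα : β ≠ α := by
      rintro rfl
      exact (MvPolynomial.mem_support_iff.1 hβ) hzero
    rcases Finset.mem_union.1 (MvPolynomial.support_sub _ h (m * g) hβ) with hmem | hmem
    · exact hh.2 β hmem hβα
    · have hB : Ble r ((α - δ) + δ) (m * g) := Ble_monomial_mul hr (Ble_lead hg)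
      rw [hαδ] at hB
      rcases hB β hmem with rfl | hrel
      · exact absurd rfl hβα
      · exact hrel
  · refine le_trans (MvPolynomial.totalDegree_sub h (m * g)) ?_
    have h1 : (m * g).totalDegree ≤ mdeg (α - δ) + g.totalDegree := by
      refine le_trans (MvPolynomial.totalDegree_mul m g) ?_
      exact Nat.add_le_add_right (MvPolynomial.totalDegree_monomial_le _ _) _
    omega

/-- The state of Mora's algorithm. -/
structure MSt (n s : ℕ) (K : Type*) [Field K] where
  u : MvPolynomial (Fin n) K
  a : Fin s → MvPolynomial (Fin n) K
  h : MvPolynomial (Fin n) K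
  α : Mon n
  T : List ((MvPolynomial (Fin n) K) × (Mon n) × (MvPolynomial (Fin n) K) ×
        (Fin s → MvPolynomial (Fin n) K))

variable (r : Mon n → Mon n → Prop) (f : MvPolynomial (Fin n) K)
  (F : Fin s → MvPolynomial (Fin n) K) (αf : Mon n)

/-- The invariant of Mora's algorithm. -/
structure MInv (st : MSt n s K) : Prop where
  lead : IsLeadMon r st.h st.α
  equ : st.u * f = (∑ i, st.a i * F i) + st.h
  u0 : coeff 0 st.u ≠ 0
  aB : ∀ i, Ble r αf (st.a i * F i)
  hB : Ble r αf st.h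
  tEq : ∀ e ∈ st.T, e.2.2.1 * f = (∑ i, e.2.2.2 i * F i) + e.1
  tLead : ∀ e ∈ st.T, IsLeadMon r e.1 e.2.1
  tGt : ∀ e ∈ st.T, r e.2.1 st.α
  tU0 : ∀ e ∈ st.T, coeff 0 e.2.2.1 ≠ 0
  taB : ∀ e ∈ st.T, ∀ i, Ble r αf (e.2.2.2 i * F i)

/-- The step relation of Mora's algorithm. -/
def MNext (st st' : MSt n s K) : Prop :=
  r st.α st'.α ∧
  ((st'.T = st.T ∧ st'.h.totalDegree ≤ st.h.totalDegree) ∨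
   (st'.T = (st.h, st.α, st.u, st.a) :: st.T ∧
     ∀ e ∈ st.T, e.2.1 ≤ st.α →
       st.h.totalDegree + mdeg e.2.1 < e.1.totalDegree + mdeg st.α))

theorem dep_choice {X : Type*} (P : X → Prop) (R : X → X → Prop) (x₀ : X) (h₀ : P x₀)
    (hstep : ∀ x, P x → ∃ y, P y ∧ R x y) :
    ∃ g : ℕ → X, g 0 = x₀ ∧ ∀ k, P (g k) ∧ R (g k) (g (k + 1)) := by
  choose nxt hP hR using hstep
  let g : ℕ → {x // P x} := fun k =>
    Nat.rec ⟨x₀, h₀⟩ (fun _ p => ⟨nxt p.1 p.2, hP p.1 p.2⟩) k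
  exact ⟨fun k => (g k).1, rfl, fun k => ⟨(g k).2, hR (g k).1 (g k).2⟩⟩

lemma finite_mdeg_le (D : ℕ) : {β : Mon n | mdeg β ≤ D}.Finite := by
  classical
  have hinj : Set.InjOn (fun (β : Mon n) => (β : Fin n → ℕ)) {β : Mon n | mdeg β ≤ D} :=
    fun a _ b _ hab => DFunLike.coe_injective hab
  have himg : (fun (β : Mon n) => (β : Fin n → ℕ)) '' {β : Mon n | mdeg β ≤ D} ⊆
      Set.pi Set.univ (fun _ : Fin n => Set.Iic D) := by
    rintro v ⟨β, hβ, rfl⟩ i _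
    have h1 : β i ≤ mdeg β := by
      by_cases hi : i ∈ β.support
      · exact Finset.single_le_sum (f := fun j => β j) (fun _ _ => Nat.zero_le _) hi
      · simp [Finsupp.notMem_support_iff.1 hi]
    exact le_trans h1 hβ
  have hfin : ((fun (β : Mon n) => (β : Fin n → ℕ)) '' {β : Mon n | mdeg β ≤ D}).Finite :=
    Set.Finite.subset (Set.Finite.pi fun _ => Set.finite_Iic D) himg
  exact (Set.finite_image_iff hinj).1 hfin

/-- Dickson's lemma, in subsequence form. -/
lemma dickson (q : ℕ → Mon n) : ∃ g : ℕ ↪o ℕ, ∀ i j, i ≤ j → q (g i) ≤ q (g j) := by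
  have hpwo : (Set.univ : Set (Fin n → ℕ)).IsPWO :=
    Set.isPWO_of_wellQuasiOrderedLE Set.univ
  obtain ⟨g, hg⟩ := hpwo.exists_monotone_subseq (f := fun k => (q k : Fin n → ℕ))
    (fun _ => Set.mem_univ _)
  refine ⟨g, fun i j hij => ?_⟩
  intro x
  exact hg hij x

end Mora

namespace Mora

open MoraAux

variable {n s : ℕ} {K : Type*} [Field K]

lemma acond {r : Mon n → Mon n → Prop} (hr : IsLocalOrder r)
    {f : MvPolynomial (Fin n) K} {F : Fin s → MvPolynomial (Fin n) K} {αf : Mon n}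
    (hαf : IsLeadMon r f αf) (hF : ∀ i, F i ≠ 0)
    {a : Fin s → MvPolynomial (Fin n) K} (haB : ∀ i, Ble r αf (a i * F i)) :
    ∀ i, a i ≠ 0 → ∃ α β, IsLeadMon r f α ∧ IsLeadMon r (a i * F i) β ∧
      (r α β ∨ α = β) := by
  intro i hai
  have hne : a i * F i ≠ 0 := mul_ne_zero hai (hF i)
  obtain ⟨β, hβ⟩ := lead_exists hr hne
  rcases haB i β hβ.1 with h | h
  · exact ⟨αf, β, hαf, hβ, Or.inr h.symm⟩
  · exact ⟨αf, β, hαf, hβ, Or.inl h⟩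

theorem step {r : Mon n → Mon n → Prop} (hr : IsLocalOrder r)
    {f : MvPolynomial (Fin n) K} {F : Fin s → MvPolynomial (Fin n) K} {αf : Mon n}
    (hαf : IsLeadMon r f αf) (hF : ∀ i, F i ≠ 0)
    (hcon : ∀ (u h : MvPolynomial (Fin n) K) (a : Fin s → MvPolynomial (Fin n) K),
      ¬ (IsLeadMon r u 0 ∧
        u * f = (∑ i, a i * F i) + h ∧
        (∀ i, a i ≠ 0 → ∃ α β, IsLeadMon r f α ∧ IsLeadMon r (a i * F i) β ∧
          (r α β ∨ α = β)) ∧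
        (h = 0 ∨ ∃ γ, IsLeadMon r h γ ∧
          ∀ i, ∀ δ, IsLeadMon r (F i) δ → ¬ δ ≤ γ)))
    (st : MSt n s K) (inv : MInv r f F αf st) :
    ∃ st', MInv r f F αf st' ∧ MNext r st st' := by
  classical
  -- the current remainder is reducible
  have hred : ∃ i δ, IsLeadMon r (F i) δ ∧ δ ≤ st.α := by
    by_contra hno
    exact hcon st.u st.h st.a ⟨lead_of_const hr inv.u0, inv.equ,
      acond hr hαf hF inv.aB,
      Or.inr ⟨st.α, inv.lead, fun i δ hδ hle => hno ⟨i, δ, hδ, hle⟩⟩⟩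
  -- candidate reducers and minimal-écart choice
  set Cand : MvPolynomial (Fin n) K → Mon n → Prop := fun g δ =>
    IsLeadMon r g δ ∧ δ ≤ st.α ∧
      ((∃ i, F i = g) ∨ ∃ e ∈ st.T, e.1 = g ∧ e.2.1 = δ) with hCand
  set KS : Set ℕ := {k | ∃ g δ, Cand g δ ∧ k = g.totalDegree - mdeg δ} with hKS
  have hKSne : KS.Nonempty := by
    obtain ⟨i, δ, hδ, hle⟩ := hred
    exact ⟨(F i).totalDegree - mdeg δ, F i, δ, ⟨hδ, hle, Or.inl ⟨i, rfl⟩⟩, rfl⟩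
  obtain ⟨g₀, δ₀, hcand₀, hk₀⟩ := Nat.sInf_mem hKSne
  have hmin : ∀ g δ, Cand g δ → sInf KS ≤ g.totalDegree - mdeg δ :=
    fun g δ hc => Nat.sInf_le ⟨g, δ, hc, rfl⟩
  obtain ⟨hg₀lead, hdiv₀, hwit⟩ := hcand₀
  set γ := st.α - δ₀ with hγ
  set mr := monomial γ (coeff st.α st.h / coeff δ₀ g₀) with hmr
  set h' := st.h - mr * g₀ with hh'
  obtain ⟨hsup, hdeg'⟩ := reduce hr inv.lead hg₀lead hdiv₀
  rw [← hγ] at hsup hdeg'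
  rw [← hmr] at hsup hdeg'
  rw [← hh'] at hsup hdeg'
  have hγδ : γ + δ₀ = st.α := tsub_add_cancel_of_le hdiv₀
  have hγsum : mdeg γ + mdeg δ₀ = mdeg st.α := by rw [← mdeg_add, hγδ]
  have hδdeg : mdeg δ₀ ≤ g₀.totalDegree := MvPolynomial.le_totalDegree hg₀lead.1
  have hαdeg : mdeg st.α ≤ st.h.totalDegree := MvPolynomial.le_totalDegree inv.lead.1
  have hst_le : st.α = αf ∨ r αf st.α := inv.hB st.α inv.lead.1
  -- construct the new representation
  obtain ⟨u', a', hequ', hu0', haB'⟩ :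
      ∃ (u' : MvPolynomial (Fin n) K) (a' : Fin s → MvPolynomial (Fin n) K),
        u' * f = (∑ i, a' i * F i) + h' ∧ coeff 0 u' ≠ 0 ∧
        ∀ i, Ble r αf (a' i * F i) := by
    rcases hwit with ⟨i₀, hgi⟩ | ⟨e, heT, heg, heδ⟩
    · -- reduce by F i₀
      refine ⟨st.u, fun j => if j = i₀ then st.a i₀ + mr else st.a j, ?_, inv.u0, ?_⟩
      · have hsum' : (∑ j, (if j = i₀ then st.a i₀ + mr else st.a j) * F j)
            = (∑ j, st.a j * F j) + mr * F i₀ := by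
          have hcg : ∀ j ∈ Finset.univ, (if j = i₀ then st.a i₀ + mr else st.a j) * F j
              = st.a j * F j + (if j = i₀ then mr * F j else 0) := by
            intro j _
            by_cases hj : j = i₀
            · subst hj; rw [if_pos rfl, if_pos rfl, add_mul]
            · rw [if_neg hj, if_neg hj, add_zero]
          rw [Finset.sum_congr rfl hcg, Finset.sum_add_distrib,
            Finset.sum_ite_eq' Finset.univ i₀ (fun j => mr * F j), if_pos (Finset.mem_univ i₀)]
        show st.u * f = (∑ j, (if j = i₀ then st.a i₀ + mr else st.a j) * F j) + h'
        rw [inv.equ, hsum', hh', ← hgi]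
        ring
      · intro j
        show Ble r αf ((if j = i₀ then st.a i₀ + mr else st.a j) * F j)
        by_cases hj : j = i₀
        · rw [if_pos hj, hj, add_mul]
          refine Ble_add (inv.aB i₀) ?_
          have hB : Ble r (γ + δ₀) (mr * F i₀) := by
            rw [hmr]
            exact Ble_monomial_mul hr (Ble_lead (hgi ▸ hg₀lead))
          rw [hγδ] at hB
          exact Ble_trans hr hB hst_le
        · rw [if_neg hj]; exact inv.aB j
    · -- reduce by a previous remainder e ∈ T
      have hγne : γ ≠ 0 := by
        intro h0
        have h1 : r δ₀ st.α := heδ ▸ inv.tGt e heT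
        have h2 : st.α ≤ δ₀ := tsub_eq_zero_iff_le.1 (hγ ▸ h0)
        exact rne hr h1 (le_antisymm hdiv₀ h2)
      refine ⟨st.u - mr * e.2.2.1, fun j => st.a j - mr * e.2.2.2 j, ?_, ?_, ?_⟩
      · have hT := inv.tEq e heT
        have hsum' : (∑ j, (st.a j - mr * e.2.2.2 j) * F j)
            = (∑ j, st.a j * F j) - mr * ∑ j, e.2.2.2 j * F j := by
          rw [Finset.mul_sum, ← Finset.sum_sub_distrib]
          exact Finset.sum_congr rfl fun j _ => by ring
        show (st.u - mr * e.2.2.1) * f = (∑ j, (st.a j - mr * e.2.2.2 j) * F j) + h'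
        rw [hsum', hh', ← heg]
        linear_combination inv.equ - mr * hT
      · rw [MvPolynomial.coeff_sub, coeff_zero_monomial_mul hγne, sub_zero]
        exact inv.u0
      · intro j
        have hrw : (st.a j - mr * e.2.2.2 j) * F j
            = st.a j * F j - mr * (e.2.2.2 j * F j) := by ring
        rw [hrw]
        exact Ble_sub (inv.aB j) (Ble_monomial_mul' hr hγne (inv.taB e heT j))
  -- the new remainder is nonzero (else contradiction), get its lead monomial
  by_cases hzero : h' = 0
  · exact absurd ⟨lead_of_const hr hu0', hequ', acond hr hαf hF haB', Or.inl hzero⟩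
      (hcon u' h' a')
  obtain ⟨α', hα'⟩ := lead_exists hr hzero
  have hαα' : r st.α α' := hsup α' hα'.1
  have hB' : Ble r αf h' := by
    intro β hβ
    rcases hst_le with heq | hlt
    · exact Or.inr (heq ▸ hsup β hβ)
    · exact Or.inr (rtrans hr hlt (hsup β hβ))
  by_cases hbr : g₀.totalDegree + mdeg st.α ≤ st.h.totalDegree + mdeg δ₀
  · -- no new element added to T
    refine ⟨⟨u', a', h', α', st.T⟩, ?_, ?_⟩
    · exact {
        lead := hα'
        equ := hequ'
        u0 := hu0'
        aB := haB'
        hB := hB'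
        tEq := inv.tEq
        tLead := inv.tLead
        tGt := fun e heT => rtrans hr (inv.tGt e heT) hαα'
        tU0 := inv.tU0
        taB := inv.taB }
    · refine ⟨hαα', Or.inl ⟨rfl, ?_⟩⟩
      show h'.totalDegree ≤ st.h.totalDegree
      have hle : mdeg γ + g₀.totalDegree ≤ st.h.totalDegree := by omega
      exact le_trans hdeg' (max_le le_rfl hle)
  · -- add the current remainder to T
    refine ⟨⟨u', a', h', α', (st.h, st.α, st.u, st.a) :: st.T⟩, ?_, ?_⟩
    · refine {
        lead := hα'
        equ := hequ'
        u0 := hu0'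
        aB := haB'
        hB := hB'
        tEq := ?_
        tLead := ?_
        tGt := ?_
        tU0 := ?_
        taB := ?_ }
      · intro e he
        rcases List.mem_cons.1 he with rfl | heT
        · exact inv.equ
        · exact inv.tEq e heT
      · intro e he
        rcases List.mem_cons.1 he with rfl | heT
        · exact inv.lead
        · exact inv.tLead e heT
      · intro e he
        rcases List.mem_cons.1 he with rfl | heT
        · exact hαα'
        · exact rtrans hr (inv.tGt e heT) hαα'
      · intro e he
        rcases List.mem_cons.1 he with rfl | heT
        · exact inv.u0
        · exact inv.tU0 e heT
      · intro e he
        rcases List.mem_cons.1 he with rfl | heT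
        · exact inv.aB
        · exact inv.taB e heT
    · refine ⟨hαα', Or.inr ⟨rfl, ?_⟩⟩
      intro e heT hele
      have hc : Cand e.1 e.2.1 := ⟨inv.tLead e heT, hele, Or.inr ⟨e, heT, rfl, rfl⟩⟩
      have h1 : sInf KS ≤ e.1.totalDegree - mdeg e.2.1 := hmin _ _ hc
      have h2 : mdeg e.2.1 ≤ e.1.totalDegree :=
        MvPolynomial.le_totalDegree (inv.tLead e heT).1
      omega

end Mora

/-- Mora's weak normal form: for a local order `r` and nonzero polynomials
`f, f₁, ..., f_s` there are `u, a₁, ..., a_s, h` with `lt(u) = 1` (i.e. `0` is the leading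
monomial of `u`, so `u` is a unit in `Loc_>(K[X])`) such that `u·f = ∑ aᵢ·fᵢ + h`,
`lm(f) ≥ lm(aᵢ·fᵢ)` whenever `aᵢ ≠ 0`, and `h = 0` or `lm(h)` is not divisible by any
`lm(fᵢ)`. -/
theorem mora_weak_normal_form {n s : ℕ} {K : Type*} [Field K]
    (r : (Fin n →₀ ℕ) → (Fin n →₀ ℕ) → Prop) (hr : IsLocalOrder r)
    (f : MvPolynomial (Fin n) K) (hf : f ≠ 0)
    (F : Fin s → MvPolynomial (Fin n) K) (hF : ∀ i, F i ≠ 0) :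
    ∃ (u h : MvPolynomial (Fin n) K) (a : Fin s → MvPolynomial (Fin n) K),
      IsLeadMon r u 0 ∧
      u * f = (∑ i, a i * F i) + h ∧
      (∀ i, a i ≠ 0 → ∃ α β, IsLeadMon r f α ∧ IsLeadMon r (a i * F i) β ∧
        (r α β ∨ α = β)) ∧
      (h = 0 ∨ ∃ γ, IsLeadMon r h γ ∧
        ∀ i, ∀ δ, IsLeadMon r (F i) δ → ¬ δ ≤ γ) := by
  classical
  by_contra hcon'
  have hcon : ∀ (u h : MvPolynomial (Fin n) K) (a : Fin s → MvPolynomial (Fin n) K),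
      ¬ (IsLeadMon r u 0 ∧
        u * f = (∑ i, a i * F i) + h ∧
        (∀ i, a i ≠ 0 → ∃ α β, IsLeadMon r f α ∧ IsLeadMon r (a i * F i) β ∧
          (r α β ∨ α = β)) ∧
        (h = 0 ∨ ∃ γ, IsLeadMon r h γ ∧
          ∀ i, ∀ δ, IsLeadMon r (F i) δ → ¬ δ ≤ γ)) :=
    fun u h a hc => hcon' ⟨u, h, a, hc.1, hc.2.1, hc.2.2.1, hc.2.2.2⟩
  obtain ⟨αf, hαf⟩ := MoraAux.lead_exists hr hf
  -- the initial state of Mora's algorithm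
  have inv₀ : Mora.MInv r f F αf ⟨1, fun _ => 0, f, αf, []⟩ := by
    refine {
      lead := hαf
      equ := by simp
      u0 := by simp
      aB := by intro i β hβ; simp at hβ
      hB := MoraAux.Ble_lead hαf
      tEq := by intro e he; simp at he
      tLead := by intro e he; simp at he
      tGt := by intro e he; simp at he
      tU0 := by intro e he; simp at he
      taB := by intro e he; simp at he }
  -- run the algorithm forever
  obtain ⟨g, hg0, hgs⟩ := Mora.dep_choice (Mora.MInv r f F αf) (Mora.MNext r)
    ⟨1, fun _ => 0, f, αf, []⟩ inv₀ (Mora.step hr hαf hF hcon)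
  have hP : ∀ k, Mora.MInv r f F αf (g k) := fun k => (hgs k).1
  have hN : ∀ k, Mora.MNext r (g k) (g (k + 1)) := fun k => (hgs k).2
  -- lead monomials strictly decrease
  have hlt : ∀ i j, i < j → r ((g i).α) ((g j).α) := by
    intro i j
    induction j with
    | zero => omega
    | succ j ih =>
      intro hij
      rcases Nat.lt_succ_iff_lt_or_eq.1 hij with h | h
      · exact MoraAux.rtrans hr (ih h) (hN j).1
      · rw [h]; exact (hN j).1
  have hInj : Function.Injective (fun k => (g k).α) := by
    intro i j hij
    by_contra hne
    rcases Nat.lt_or_ge i j with h | h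
    · exact MoraAux.rne hr (hlt i j h) hij
    · exact MoraAux.rne hr (hlt j i (by omega)) hij.symm
  -- the list T grows monotonically
  have hTmono : ∀ i j, i ≤ j → ∀ x ∈ (g i).T, x ∈ (g j).T := by
    intro i j
    induction j with
    | zero =>
      intro hij x hx
      have hi0 : i = 0 := by omega
      rwa [hi0] at hx
    | succ j ih =>
      intro hij x hx
      rcases (by omega : i ≤ j ∨ i = j + 1) with h | h
      · have hx' := ih h x hx
        rcases (hN j).2 with ⟨he, _⟩ | ⟨he, _⟩
        · rwa [he]
        · rw [he]; exact List.mem_cons_of_mem _ hx'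
      · subst h; exact hx
  by_cases hA : ∃ N, ∀ k, N ≤ k → (g (k + 1)).T = (g k).T
  · -- Case A : from some point on, no additions to T; degrees stay bounded,
    -- but lead monomials are infinitely many distinct monomials of bounded degree
    obtain ⟨N, hNs⟩ := hA
    set D := (g N).h.totalDegree with hD
    have hdegle : ∀ k, N ≤ k → (g k).h.totalDegree ≤ D := by
      intro k hk
      induction k with
      | zero =>
        have hN0 : N = 0 := by omega
        rw [hD, hN0]
      | succ k ih =>
        rcases (by omega : N ≤ k ∨ N = k + 1) with h | h
        · rcases (hN k).2 with ⟨_, hd⟩ | ⟨hcons, _⟩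
          · exact le_trans hd (ih h)
          · exact absurd (hNs k h ▸ hcons).symm (List.cons_ne_self _ _)
        · rw [← h]
    have hmem : ∀ j : ℕ, (g (N + j)).α ∈ {β : MoraAux.Mon n | MoraAux.mdeg β ≤ D} := by
      intro j
      exact le_trans (MvPolynomial.le_totalDegree (hP (N + j)).lead.1)
        (hdegle (N + j) (Nat.le_add_right _ _))
    have hinj : Function.Injective (fun j : ℕ => (g (N + j)).α) := by
      intro i j hij
      have := hInj hij
      omega
    exact (Mora.finite_mdeg_le D).not_infinite
      (Set.infinite_of_injective_forall_mem hinj hmem)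
  · -- Case B : infinitely many additions to T; contradicts Dickson's lemma
    push_neg at hA
    have hstep' : ∀ k : ℕ, (g (k + 1)).T ≠ (g k).T →
        ∃ k', ((g (k' + 1)).T ≠ (g k').T) ∧ k < k' := by
      intro k _
      obtain ⟨k', hk1, hk2⟩ := hA (k + 1)
      exact ⟨k', hk2, by omega⟩
    obtain ⟨k₀, hk₀1, hk₀2⟩ := hA 0
    obtain ⟨t, ht0, hts⟩ := Mora.dep_choice (fun k => (g (k + 1)).T ≠ (g k).T) (· < ·)
      k₀ hk₀2 hstep'
    have htmono : ∀ i j, i < j → t i < t j := by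
      intro i j
      induction j with
      | zero => omega
      | succ j ih =>
        intro hij
        rcases Nat.lt_succ_iff_lt_or_eq.1 hij with h | h
        · exact lt_trans (ih h) (hts j).2
        · rw [h]; exact (hts j).2
    -- at each add-time, the branch taken is the second one
    have hadd : ∀ j, (g (t j + 1)).T = ((g (t j)).h, (g (t j)).α, (g (t j)).u, (g (t j)).a)
          :: (g (t j)).T ∧
        ∀ e ∈ (g (t j)).T, e.2.1 ≤ (g (t j)).α →
          (g (t j)).h.totalDegree + MoraAux.mdeg e.2.1
            < e.1.totalDegree + MoraAux.mdeg (g (t j)).α := by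
      intro j
      rcases (hN (t j)).2 with ⟨he, _⟩ | ⟨he, hc⟩
      · exact absurd he (hts j).1
      · exact ⟨he, hc⟩
    -- the key inequality between two add-times
    have hkey : ∀ i j, i < j → (g (t i)).α ≤ (g (t j)).α →
        (g (t j)).h.totalDegree + MoraAux.mdeg ((g (t i)).α)
          < (g (t i)).h.totalDegree + MoraAux.mdeg ((g (t j)).α) := by
      intro i j hij hle
      have h1 : ((g (t i)).h, (g (t i)).α, (g (t i)).u, (g (t i)).a) ∈ (g (t j)).T := by
        apply hTmono (t i + 1) (t j) (by have := htmono i j hij; omega)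
        rw [(hadd i).1]
        exact List.mem_cons_self
      exact (hadd j).2 _ h1 hle
    -- Dickson's lemma gives a monotone subsequence of the lead monomials
    obtain ⟨φ, hφ⟩ := Mora.dickson (fun j => (g (t j)).α)
    set E : ℕ → ℕ := fun j => (g (t (φ j))).h.totalDegree
      - MoraAux.mdeg ((g (t (φ j))).α) with hE
    have hEdec : ∀ j, E (j + 1) < E j := by
      intro j
      have h1 : φ j < φ (j + 1) := φ.strictMono (Nat.lt_succ_self j)
      have h2 : (g (t (φ j))).α ≤ (g (t (φ (j + 1)))).α := hφ j (j + 1) (Nat.le_succ j)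
      have h3 := hkey (φ j) (φ (j + 1)) h1 h2
      have h4 : MoraAux.mdeg ((g (t (φ j))).α) ≤ (g (t (φ j))).h.totalDegree :=
        MvPolynomial.le_totalDegree (hP _).lead.1
      have h5 : MoraAux.mdeg ((g (t (φ (j + 1)))).α) ≤ (g (t (φ (j + 1)))).h.totalDegree :=
        MvPolynomial.le_totalDegree (hP _).lead.1
      simp only [hE]
      omega
    have hbnd : ∀ j, E j + j ≤ E 0 := by
      intro j
      induction j with
      | zero => omega
      | succ j ih => have := hEdec j; omega
    have := hbnd (E 0 + 1)
    omega
end
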